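/- Let g : ℝ × [0,∞) → [0,∞) be non-decreasing and locally Lipschitz in each of its variables with g(0,0) = 0, and assume that ∫₁^∞ s^{−1−p} g(s, s^{p/q}) ds < ∞ for some p, q > 0. Let u : Ω → ℝ and v : Ω → [0,∞) be measurable functions, and assume there exist constants C_u, C_v > 0 such that e_u(s) ≤ C_u s^{−p} and e_v(s) ≤ C_v s^{−q} for all s > 0. Then for every s₀ > 0 one has ∫_Ω g(u,v) φ dx ≤ ∫_{E_u(s₀)^c ∩ E_v(s₀^{p/q})^c} g(u,v) φ dx + 2p (C_u + C_v) ∫_{s₀}^∞ s^{−1−p} g(s, s^{p/q}) ds. -/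

import Mathlib

open MeasureTheory Set Metric Filter
open scoped ENNReal

private lemma stmt0_meas_rpow_const (c : ℝ) : Measurable fun t : ℝ => t ^ c := by
  measurability

/-- Uniform integrability lemma: if `g` is non-decreasing, locally
Lipschitz in each variable, with `g 0 0 = 0` and a finite tail integral, and the
weighted distribution functions of `u` and `v` decay like `Cᵤ s^{-p}`, `Cᵥ s^{-q}`,
then the weighted integral of `g(u, v)` splits as stated. -/
theorem stmt_0 {N : ℕ} (Ω : Set (EuclideanSpace ℝ (Fin N))) (hΩ : IsOpen Ω)
    (φ : EuclideanSpace ℝ (Fin N) → ℝ) (hφm : Measurable φ) (hφpos : ∀ x ∈ Ω, 0 < φ x)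
    (g : ℝ → ℝ → ℝ)
    (hgnn : ∀ s t : ℝ, 0 ≤ t → 0 ≤ g s t)
    (hgmono1 : ∀ t : ℝ, 0 ≤ t → Monotone fun s => g s t)
    (hgmono2 : ∀ s : ℝ, MonotoneOn (fun t => g s t) (Set.Ici 0))
    (hglip1 : ∀ t : ℝ, 0 ≤ t → ∀ s₀ : ℝ, ∃ K : NNReal, ∃ ε > 0,
      LipschitzOnWith K (fun s => g s t) (Metric.ball s₀ ε))
    (hglip2 : ∀ s t₀ : ℝ, 0 ≤ t₀ → ∃ K : NNReal, ∃ ε > 0,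
      LipschitzOnWith K (fun t => g s t) (Metric.ball t₀ ε ∩ Set.Ici 0))
    (hg00 : g 0 0 = 0)
    (p q : ℝ) (hp : 0 < p) (hq : 0 < q)
    (hgint : IntegrableOn (fun s : ℝ => s ^ (-1 - p) * g s (s ^ (p / q))) (Set.Ioi (1 : ℝ)))
    (u v : EuclideanSpace ℝ (Fin N) → ℝ) (hu : Measurable u) (hv : Measurable v)
    (hvnn : ∀ x ∈ Ω, 0 ≤ v x)
    (Cu Cv : ℝ) (hCu : 0 < Cu) (hCv : 0 < Cv)
    (heu : ∀ s : ℝ, 0 < s →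
      ∫⁻ x in {x ∈ Ω | s < |u x|}, ENNReal.ofReal (φ x) ≤ ENNReal.ofReal (Cu * s ^ (-p)))
    (hev : ∀ s : ℝ, 0 < s →
      ∫⁻ x in {x ∈ Ω | s < |v x|}, ENNReal.ofReal (φ x) ≤ ENNReal.ofReal (Cv * s ^ (-q)))
    (s₀ : ℝ) (hs₀ : 0 < s₀) :
    ∫⁻ x in Ω, ENNReal.ofReal (g (u x) (v x) * φ x) ≤
      (∫⁻ x in {x ∈ Ω | |u x| ≤ s₀ ∧ |v x| ≤ s₀ ^ (p / q)},
          ENNReal.ofReal (g (u x) (v x) * φ x)) +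
      ENNReal.ofReal (2 * p * (Cu + Cv) *
        ∫ s in Set.Ioi s₀, s ^ (-1 - p) * g s (s ^ (p / q))) := by
  classical
  have hq0 : q ≠ 0 := ne_of_gt hq
  have hp0 : p ≠ 0 := ne_of_gt hp
  have hpq : 0 < p / q := div_pos hp hq
  have hqp1 : q / p * (p / q) = 1 := by field_simp
  -- the composite profile function
  set G : ℝ → ℝ := fun t => g t (t ^ (p / q)) with hGdef
  have hGmono : ∀ a b : ℝ, 0 ≤ a → a ≤ b → G a ≤ G b := by
    intro a b ha hab
    have h2 : (0:ℝ) ≤ a ^ (p / q) := Real.rpow_nonneg ha _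
    have h3 : (0:ℝ) ≤ b ^ (p / q) := Real.rpow_nonneg (ha.trans hab) _
    have h1 : a ^ (p / q) ≤ b ^ (p / q) := Real.rpow_le_rpow ha hab hpq.le
    calc G a = g a (a ^ (p/q)) := rfl
      _ ≤ g b (a ^ (p/q)) := hgmono1 _ h2 hab
      _ ≤ g b (b ^ (p/q)) := hgmono2 b h2 h3 h1
  have hGnn : ∀ t : ℝ, 0 ≤ t → 0 ≤ G t := fun t ht => hgnn _ _ (Real.rpow_nonneg ht _)
  set Gm : ℝ → ℝ := fun t => G (max t s₀) with hGmdef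
  have hGmmono : Monotone Gm := fun a b hab =>
    hGmono _ _ (le_trans hs₀.le (le_max_right _ _)) (max_le_max hab le_rfl)
  have hGmnn : ∀ t, 0 ≤ Gm t := fun t => hGnn _ (le_trans hs₀.le (le_max_right _ _))
  have hGmmeas : Measurable Gm := hGmmono.measurable
  -- the radial integrand
  set K : ℝ → ℝ := fun t => t ^ (-1 - p) * Gm t with hKdef
  have hrp : (-1 - p) < -1 := by linarith
  have hKmeas : Measurable K := (stmt0_meas_rpow_const (-1 - p)).mul hGmmeas
  have hKnn : ∀ t : ℝ, 0 < t → 0 ≤ K t := fun t ht =>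
    mul_nonneg (Real.rpow_nonneg ht.le _) (hGmnn t)
  have hKint : IntegrableOn K (Set.Ioi s₀) := by
    have hMs : s₀ ≤ max s₀ 1 := le_max_left _ _
    have h1 : IntegrableOn K (Set.Ioi (max s₀ 1)) := by
      have h2 : IntegrableOn (fun t : ℝ => t ^ (-1 - p) * g t (t ^ (p / q)))
          (Set.Ioi (max s₀ 1)) := hgint.mono_set (Ioi_subset_Ioi (le_max_right _ _))
      refine h2.congr_fun (fun t ht => ?_) measurableSet_Ioi
      simp only [hKdef, hGmdef]
      rw [max_eq_left (le_of_lt (lt_of_le_of_lt hMs ht))]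
    have h3 : IntegrableOn K (Set.Ioc s₀ (max s₀ 1)) := by
      refine Measure.integrableOn_of_bounded (M := s₀ ^ (-1 - p) * Gm (max s₀ 1))
        measure_Ioc_lt_top.ne hKmeas.aestronglyMeasurable ?_
      filter_upwards [self_mem_ae_restrict measurableSet_Ioc] with t ht
      have ht0 : 0 < t := lt_trans hs₀ ht.1
      rw [Real.norm_eq_abs, abs_of_nonneg (hKnn t ht0)]
      exact mul_le_mul (Real.rpow_le_rpow_of_nonpos hs₀ ht.1.le (by linarith))
        (hGmmono ht.2) (hGmnn t) (Real.rpow_nonneg hs₀.le _)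
    rw [← Ioc_union_Ioi_eq_Ioi hMs]
    exact h3.union h1
  set Jr : ℝ := ∫ t in Set.Ioi s₀, K t with hJrdef
  have hJnn : 0 ≤ Jr := setIntegral_nonneg measurableSet_Ioi
    (fun t ht => hKnn t (lt_trans hs₀ ht))
  have hIoiInt : ∀ a : ℝ, s₀ ≤ a → IntegrableOn K (Set.Ioi a) := fun a ha =>
    hKint.mono_set (Ioi_subset_Ioi ha)
  have hIocInt : ∀ a b : ℝ, s₀ ≤ a → IntegrableOn K (Set.Ioc a b) := fun a b ha =>
    hKint.mono_set (fun t ht => lt_of_le_of_lt ha ht.1)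
  have h_tail_eval : ∀ b : ℝ, 0 < b → ∫ t in Set.Ioi b, t ^ (-1 - p) = b ^ (-p) / p := by
    intro b hb
    have h := integral_Ioi_rpow_of_lt hrp hb
    rw [show (-1 - p + 1) = -p by ring] at h
    rw [h, neg_div_neg_eq]
  have h_Ioc_eval : ∀ a b : ℝ, 0 < a → a ≤ b →
      ∫ t in Set.Ioc a b, t ^ (-1 - p) = (a ^ (-p) - b ^ (-p)) / p := by
    intro a b ha hab
    have hb : 0 < b := lt_of_lt_of_le ha hab
    have h1 := setIntegral_union (f := fun t : ℝ => t ^ (-1 - p)) (μ := volume)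
      Ioc_disjoint_Ioi_same measurableSet_Ioi
      ((integrableOn_Ioi_rpow_of_lt hrp ha).mono_set Ioc_subset_Ioi_self)
      (integrableOn_Ioi_rpow_of_lt hrp hb)
    rw [Ioc_union_Ioi_eq_Ioi hab, h_tail_eval a ha, h_tail_eval b hb] at h1
    have hxy : (∫ t in Set.Ioc a b, t ^ (-1 - p)) = a ^ (-p) / p - b ^ (-p) / p := by
      linarith
    rw [hxy]; field_simp
  have hGc : ∀ a b : ℝ, s₀ ≤ a → a ≤ b →
      Gm a * (a ^ (-p) - b ^ (-p)) ≤ p * ∫ t in Set.Ioc a b, K t := by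
    intro a b ha hab
    have ha0 : 0 < a := lt_of_lt_of_le hs₀ ha
    have hcomp : (∫ t in Set.Ioc a b, t ^ (-1 - p) * Gm a) ≤ ∫ t in Set.Ioc a b, K t := by
      refine setIntegral_mono_on
        (((integrableOn_Ioi_rpow_of_lt hrp ha0).mono_set Ioc_subset_Ioi_self).mul_const _)
        (hIocInt a b ha) measurableSet_Ioc ?_
      intro t ht
      exact mul_le_mul_of_nonneg_left (hGmmono ht.1.le)
        (Real.rpow_nonneg (le_of_lt (lt_trans ha0 ht.1)) _)
    have hval : (∫ t in Set.Ioc a b, t ^ (-1 - p) * Gm a)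
        = (a ^ (-p) - b ^ (-p)) / p * Gm a := by
      rw [integral_mul_const, h_Ioc_eval a b ha0 hab]
    rw [hval] at hcomp
    have := mul_le_mul_of_nonneg_left hcomp hp.le
    calc Gm a * (a ^ (-p) - b ^ (-p)) = p * ((a ^ (-p) - b ^ (-p)) / p * Gm a) := by
          field_simp
      _ ≤ p * ∫ t in Set.Ioc a b, K t := this
  have hGtail : ∀ a b : ℝ, s₀ ≤ a → a ≤ b →
      Gm a * b ^ (-p) ≤ p * ∫ t in Set.Ioi b, K t := by
    intro a b ha hab
    have hb0 : 0 < b := lt_of_lt_of_le (lt_of_lt_of_le hs₀ ha) hab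
    have hcomp : (∫ t in Set.Ioi b, t ^ (-1 - p) * Gm a) ≤ ∫ t in Set.Ioi b, K t := by
      refine setIntegral_mono_on
        ((integrableOn_Ioi_rpow_of_lt hrp hb0).mul_const _)
        (hIoiInt b (le_trans ha hab)) measurableSet_Ioi ?_
      intro t ht
      exact mul_le_mul_of_nonneg_left (hGmmono (le_trans hab ht.le))
        (Real.rpow_nonneg (le_of_lt (lt_trans hb0 ht)) _)
    have hval : (∫ t in Set.Ioi b, t ^ (-1 - p) * Gm a) = b ^ (-p) / p * Gm a := by
      rw [integral_mul_const, h_tail_eval b hb0]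
    rw [hval] at hcomp
    have := mul_le_mul_of_nonneg_left hcomp hp.le
    calc Gm a * b ^ (-p) = p * (b ^ (-p) / p * Gm a) := by field_simp
      _ ≤ p * ∫ t in Set.Ioi b, K t := this
  have hIoi_le : ∀ a : ℝ, s₀ ≤ a → (∫ t in Set.Ioi a, K t) ≤ Jr := by
    intro a ha
    refine setIntegral_mono_set hKint ?_ (HasSubset.Subset.eventuallyLE (Ioi_subset_Ioi ha))
    filter_upwards [self_mem_ae_restrict measurableSet_Ioi] with t ht
    exact hKnn t (lt_trans hs₀ ht)
  -- the auxiliary maximal function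
  set wf : EuclideanSpace ℝ (Fin N) → ℝ := fun x => max |u x| (v x ^ (q / p)) with hwf
  have hwmeas : Measurable wf :=
    hu.abs.max ((stmt0_meas_rpow_const (q / p)).comp hv)
  -- the good and bad sets
  set A : Set (EuclideanSpace ℝ (Fin N)) :=
    {x ∈ Ω | |u x| ≤ s₀ ∧ |v x| ≤ s₀ ^ (p / q)} with hA
  set B : Set (EuclideanSpace ℝ (Fin N)) := Ω \ A with hB
  have hAsub : A ⊆ Ω := fun x hx => hx.1
  have hAmeas : MeasurableSet A :=
    hΩ.measurableSet.inter ((measurableSet_le hu.abs measurable_const).inter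
      (measurableSet_le hv.abs measurable_const))
  have hBmeas : MeasurableSet B := hΩ.measurableSet.diff hAmeas
  -- the weighted measure
  set μφ : Measure (EuclideanSpace ℝ (Fin N)) :=
    volume.withDensity (fun x => ENNReal.ofReal (φ x)) with hμφ
  -- distribution estimate for wf
  have htail : ∀ s : ℝ, s₀ ≤ s →
      μφ {x | x ∈ Ω ∧ s < wf x} ≤ ENNReal.ofReal ((Cu + Cv) * s ^ (-p)) := by
    intro s hs'
    have hs : 0 < s := lt_of_lt_of_le hs₀ hs'
    have hsub : {x | x ∈ Ω ∧ s < wf x} ⊆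
        {x ∈ Ω | s < |u x|} ∪ {x ∈ Ω | s ^ (p / q) < |v x|} := by
      rintro x ⟨hxΩ, hxw⟩
      rcases lt_max_iff.mp hxw with h | h
      · exact Or.inl ⟨hxΩ, h⟩
      · right
        refine ⟨hxΩ, ?_⟩
        have h2 : s ^ (p/q) < (v x ^ (q/p)) ^ (p/q) := Real.rpow_lt_rpow hs.le h hpq
        rw [← Real.rpow_mul (hvnn x hxΩ), hqp1, Real.rpow_one] at h2
        exact lt_of_lt_of_le h2 (le_abs_self _)
    have hmeas1 : MeasurableSet {x ∈ Ω | s < |u x|} :=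
      hΩ.measurableSet.inter (measurableSet_lt measurable_const hu.abs)
    have hmeas2 : MeasurableSet {x ∈ Ω | s ^ (p / q) < |v x|} :=
      hΩ.measurableSet.inter (measurableSet_lt measurable_const hv.abs)
    calc μφ {x | x ∈ Ω ∧ s < wf x}
        ≤ μφ ({x ∈ Ω | s < |u x|} ∪ {x ∈ Ω | s ^ (p / q) < |v x|}) := measure_mono hsub
      _ ≤ μφ {x ∈ Ω | s < |u x|} + μφ {x ∈ Ω | s ^ (p / q) < |v x|} := measure_union_le _ _
      _ ≤ ENNReal.ofReal (Cu * s ^ (-p)) + ENNReal.ofReal (Cv * (s ^ (p/q)) ^ (-q)) := by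
          refine add_le_add ?_ ?_
          · rw [hμφ, withDensity_apply _ hmeas1]; exact heu s hs
          · rw [hμφ, withDensity_apply _ hmeas2]
            exact hev _ (Real.rpow_pos_of_pos hs _)
      _ = ENNReal.ofReal ((Cu + Cv) * s ^ (-p)) := by
          rw [← Real.rpow_mul hs.le, show p / q * (-q) = -p by field_simp,
            ← ENNReal.ofReal_add (by positivity) (by positivity)]
          congr 1; ring
  -- every point of B has large wf
  have hwB : ∀ x ∈ B, s₀ < wf x := by
    intro x hx
    obtain ⟨hxΩ, hxA⟩ := hx
    by_contra hcon
    push_neg at hcon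
    apply hxA
    refine ⟨hxΩ, le_trans (le_max_left _ _) hcon, ?_⟩
    have h1 : v x ^ (q/p) ≤ s₀ := le_trans (le_max_right _ _) hcon
    have h2 : (v x ^ (q/p)) ^ (p/q) ≤ s₀ ^ (p/q) :=
      Real.rpow_le_rpow (Real.rpow_nonneg (hvnn x hxΩ) _) h1 hpq.le
    rw [← Real.rpow_mul (hvnn x hxΩ), hqp1, Real.rpow_one] at h2
    rwa [abs_of_nonneg (hvnn x hxΩ)]
  -- the main estimate on B, for every ratio r > 1
  have key : ∀ r : ℝ, 1 < r →
      (∫⁻ x in B, ENNReal.ofReal (g (u x) (v x) * φ x)) ≤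
        ENNReal.ofReal (2 * (Cu + Cv) * p * Jr * r ^ p) := by
    intro r hr
    have hr0 : (0:ℝ) < r := lt_trans one_pos hr
    have hbase_pos : ∀ k : ℕ, 0 < r ^ k * s₀ := fun k => mul_pos (pow_pos hr0 k) hs₀
    have hbase_mono : ∀ {i j : ℕ}, i ≤ j → r ^ i * s₀ ≤ r ^ j * s₀ := fun h =>
      mul_le_mul_of_nonneg_right (pow_le_pow_right₀ hr.le h) hs₀.le
    have hbase_ge : ∀ k : ℕ, s₀ ≤ r ^ k * s₀ := fun k => by
      simpa using hbase_mono (Nat.zero_le k)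
    set c : ℕ → ℝ := fun k => (r ^ k * s₀) ^ (-p) with hc
    set g' : ℕ → ℝ := fun k => Gm (r ^ k * s₀) with hg'
    have hg'mono : ∀ {i j : ℕ}, i ≤ j → g' i ≤ g' j := fun h => hGmmono (hbase_mono h)
    have hg'nn : ∀ k, 0 ≤ g' k := fun k => hGmnn _
    have hcnn : ∀ k, 0 ≤ c k := fun k => Real.rpow_nonneg (hbase_pos k).le _
    have hrpnn : (0:ℝ) ≤ r ^ p := Real.rpow_nonneg hr0.le _
    have hcshift : ∀ k : ℕ, c k = r ^ p * c (k+1) := by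
      intro k
      have h1 : r ^ (k+1) * s₀ = r * (r ^ k * s₀) := by ring
      have h2 : c (k+1) = r ^ (-p) * c k := by
        simp only [hc, h1, Real.mul_rpow hr0.le (hbase_pos k).le]
      have h3 : r ^ p * r ^ (-p) = 1 := by
        rw [← Real.rpow_add hr0]; simp
      rw [h2, ← mul_assoc, h3, one_mul]
    -- the dyadic pieces
    set Bk : ℕ → Set (EuclideanSpace ℝ (Fin N)) := fun k =>
      {x | x ∈ B ∧ r ^ k * s₀ < wf x ∧ wf x ≤ r ^ (k+1) * s₀} with hBk
    have hBkmeas : ∀ k, MeasurableSet (Bk k) := fun k =>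
      hBmeas.inter ((measurableSet_lt measurable_const hwmeas).inter
        (measurableSet_le hwmeas measurable_const))
    have hcover : B ⊆ ⋃ k, Bk k := by
      intro x hx
      have hw : s₀ < wf x := hwB x hx
      have hex : ∃ n : ℕ, wf x ≤ r ^ n * s₀ := by
        obtain ⟨n, hn⟩ := pow_unbounded_of_one_lt (wf x / s₀) hr
        exact ⟨n, le_of_lt ((div_lt_iff₀ hs₀).mp hn)⟩
      have hn0 : Nat.find hex ≠ 0 := by
        intro h
        have hspec := Nat.find_spec hex
        rw [h] at hspec
        simp only [pow_zero, one_mul] at hspec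
        linarith
      obtain ⟨k, hk⟩ : ∃ k, Nat.find hex = k + 1 :=
        ⟨Nat.find hex - 1, (Nat.succ_pred_eq_of_pos (Nat.pos_of_ne_zero hn0)).symm⟩
      refine mem_iUnion.mpr ⟨k, hx, ?_, ?_⟩
      · have := Nat.find_min hex (show k < Nat.find hex by omega)
        push_neg at this
        exact this
      · rw [← hk]; exact Nat.find_spec hex
    have hpair : ∀ i j : ℕ, i ≠ j → Disjoint (Bk i) (Bk j) := by
      intro i j hij
      rw [Set.disjoint_left]
      rintro x ⟨-, hi1, hi2⟩ ⟨-, hj1, hj2⟩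
      rcases Nat.lt_or_ge i j with h | h
      · have : r ^ (i+1) * s₀ ≤ r ^ j * s₀ := hbase_mono h
        linarith
      · have hji : j < i := lt_of_le_of_ne h (Ne.symm hij)
        have : r ^ (j+1) * s₀ ≤ r ^ i * s₀ := hbase_mono hji
        linarith
    -- tail bounds for the dyadic measures
    have hm_all : (∑' k, μφ (Bk k)) ≤ ENNReal.ofReal ((Cu + Cv) * c 0) := by
      rw [ENNReal.tsum_eq_iSup_sum]
      refine iSup_le fun F => ?_
      rw [← measure_biUnion_finset (fun a _ b _ hab => hpair a b hab) (fun k _ => hBkmeas k)]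
      refine le_trans (measure_mono ?_) (htail (r ^ 0 * s₀) (hbase_ge 0))
      intro x hx
      rw [mem_iUnion₂] at hx
      obtain ⟨k, _, hxk⟩ := hx
      exact ⟨hxk.1.1, lt_of_le_of_lt (hbase_mono (Nat.zero_le k)) hxk.2.1⟩
    have hm_tail : ∀ j : ℕ, (∑' k, if j < k then μφ (Bk k) else 0) ≤
        ENNReal.ofReal ((Cu + Cv) * c (j+1)) := by
      intro j
      rw [ENNReal.tsum_eq_iSup_sum]
      refine iSup_le fun F => ?_
      rw [← Finset.sum_filter]
      rw [← measure_biUnion_finset (fun a _ b _ hab => hpair a b hab) (fun k _ => hBkmeas k)]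
      refine le_trans (measure_mono ?_) (htail (r ^ (j+1) * s₀) (hbase_ge (j+1)))
      intro x hx
      rw [mem_iUnion₂] at hx
      obtain ⟨k, hkF, hxk⟩ := hx
      have hjk : j + 1 ≤ k := (Finset.mem_filter.mp hkF).2
      exact ⟨hxk.1.1, lt_of_le_of_lt (hbase_mono hjk) hxk.2.1⟩
    -- pointwise bound on each dyadic piece
    have hstep : ∀ k : ℕ, (∫⁻ x in Bk k, ENNReal.ofReal (g (u x) (v x) * φ x)) ≤
        ENNReal.ofReal (g' (k+1)) * μφ (Bk k) := by
      intro k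
      have hpt : ∀ x ∈ Bk k, ENNReal.ofReal (g (u x) (v x) * φ x) ≤
          ENNReal.ofReal (g' (k+1)) * ENNReal.ofReal (φ x) := by
        intro x hx
        have hxΩ : x ∈ Ω := hx.1.1
        have hwnn : 0 ≤ wf x := le_trans (abs_nonneg _) (le_max_left _ _)
        have h1 : u x ≤ wf x := le_trans (le_abs_self _) (le_max_left _ _)
        have h2 : v x ≤ wf x ^ (p/q) := by
          have h3 : v x ^ (q/p) ≤ wf x := le_max_right _ _
          have h4 : (v x ^ (q/p)) ^ (p/q) ≤ wf x ^ (p/q) :=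
            Real.rpow_le_rpow (Real.rpow_nonneg (hvnn x hxΩ) _) h3 hpq.le
          rwa [← Real.rpow_mul (hvnn x hxΩ), hqp1, Real.rpow_one] at h4
        have hgb : g (u x) (v x) ≤ g' (k+1) := by
          calc g (u x) (v x) ≤ g (wf x) (v x) := hgmono1 _ (hvnn x hxΩ) h1
            _ ≤ g (wf x) (wf x ^ (p/q)) :=
                hgmono2 _ (hvnn x hxΩ) (Real.rpow_nonneg hwnn _) h2
            _ = G (wf x) := rfl
            _ ≤ G (max (r ^ (k+1) * s₀) s₀) :=
                hGmono _ _ hwnn (le_trans hx.2.2 (le_max_left _ _))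
            _ = g' (k+1) := rfl
        rw [← ENNReal.ofReal_mul (hg'nn (k+1))]
        exact ENNReal.ofReal_le_ofReal
          (mul_le_mul_of_nonneg_right hgb (hφpos x hxΩ).le)
      calc (∫⁻ x in Bk k, ENNReal.ofReal (g (u x) (v x) * φ x))
          ≤ ∫⁻ x in Bk k, ENNReal.ofReal (g' (k+1)) * ENNReal.ofReal (φ x) :=
            setLIntegral_mono (measurable_const.mul hφm.ennreal_ofReal) hpt
        _ = ENNReal.ofReal (g' (k+1)) * ∫⁻ x in Bk k, ENNReal.ofReal (φ x) :=
            lintegral_const_mul _ hφm.ennreal_ofReal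
        _ = ENNReal.ofReal (g' (k+1)) * μφ (Bk k) := by
            rw [hμφ, withDensity_apply _ (hBkmeas k)]
    -- telescoping identity
    set D : ℕ → ℝ≥0∞ := fun j => ENNReal.ofReal (g' (j+2) - g' (j+1)) with hD
    have htel : ∀ k : ℕ, ENNReal.ofReal (g' (k+1)) =
        ENNReal.ofReal (g' 1) + ∑ j ∈ Finset.range k, D j := by
      intro k
      induction k with
      | zero => simp
      | succ n ih =>
        rw [Finset.sum_range_succ, ← add_assoc, ← ih, hD]
        rw [← ENNReal.ofReal_add (hg'nn (n+1)) (sub_nonneg.mpr (hg'mono (by omega)))]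
        congr 1
        ring
    -- the real Abel-summation bound
    have hind : ∀ n : ℕ,
        (∑ j ∈ Finset.range n, (g' (j+2) - g' (j+1)) * c (j+2)) + g' 1 * c 2 ≤
          p * (∫ t in Set.Ioc (r ^ 2 * s₀) (r ^ (n+2) * s₀), K t) + g' (n+1) * c (n+2) := by
      intro n
      induction n with
      | zero =>
          rw [Finset.sum_range_zero, zero_add, Set.Ioc_self, Measure.restrict_empty,
            integral_zero_measure, mul_zero, zero_add]
      | succ n ih =>
        rw [Finset.sum_range_succ]
        have hstep2 : g' (n+2) * (c (n+2) - c (n+3)) ≤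
            p * ∫ t in Set.Ioc (r ^ (n+2) * s₀) (r ^ (n+3) * s₀), K t := by
          have h5 := hGc (r ^ (n+2) * s₀) (r ^ (n+3) * s₀) (hbase_ge _)
            (hbase_mono (by omega))
          simpa [hg', hc, mul_sub] using h5
        have hadd : (∫ t in Set.Ioc (r ^ 2 * s₀) (r ^ (n+2) * s₀), K t) +
            (∫ t in Set.Ioc (r ^ (n+2) * s₀) (r ^ (n+3) * s₀), K t) =
            ∫ t in Set.Ioc (r ^ 2 * s₀) (r ^ (n+3) * s₀), K t := by
          rw [← setIntegral_union (Ioc_disjoint_Ioc_of_le le_rfl) measurableSet_Ioc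
            (hIocInt _ _ (hbase_ge 2)) (hIocInt _ _ (hbase_ge _)),
            Set.Ioc_union_Ioc_eq_Ioc (hbase_mono (by omega)) (hbase_mono (by omega))]
        have hmul : p * (∫ t in Set.Ioc (r ^ 2 * s₀) (r ^ (n+2) * s₀), K t) +
            p * (∫ t in Set.Ioc (r ^ (n+2) * s₀) (r ^ (n+3) * s₀), K t) =
            p * ∫ t in Set.Ioc (r ^ 2 * s₀) (r ^ (n+3) * s₀), K t := by
          rw [← hadd]; ring
        have hexp : (g' (n+2) - g' (n+1)) * c (n+2) =
            g' (n+2) * c (n+2) - g' (n+1) * c (n+2) := by ring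
        have hexp2 : g' (n+2) * (c (n+2) - c (n+3)) =
            g' (n+2) * c (n+2) - g' (n+2) * c (n+3) := by ring
        rw [hexp] at *
        rw [hexp2] at hstep2
        linarith
    have hRLn : ∀ n : ℕ,
        (∑ j ∈ Finset.range n, (g' (j+2) - g' (j+1)) * c (j+2)) ≤ p * Jr := by
      intro n
      have h1 := hind n
      have h2 : g' (n+1) * c (n+2) ≤ p * ∫ t in Set.Ioi (r ^ (n+2) * s₀), K t :=
        hGtail (r ^ (n+1) * s₀) (r ^ (n+2) * s₀) (hbase_ge _) (hbase_mono (by omega))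
      have h3 : (∫ t in Set.Ioc (r ^ 2 * s₀) (r ^ (n+2) * s₀), K t) +
          (∫ t in Set.Ioi (r ^ (n+2) * s₀), K t) = ∫ t in Set.Ioi (r ^ 2 * s₀), K t := by
        rw [← setIntegral_union Ioc_disjoint_Ioi_same measurableSet_Ioi
          (hIocInt _ _ (hbase_ge 2)) (hIoiInt _ (hbase_ge _)),
          Ioc_union_Ioi_eq_Ioi (hbase_mono (by omega))]
      have h6 : p * (∫ t in Set.Ioc (r ^ 2 * s₀) (r ^ (n+2) * s₀), K t) +
          p * (∫ t in Set.Ioi (r ^ (n+2) * s₀), K t) =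
          p * ∫ t in Set.Ioi (r ^ 2 * s₀), K t := by rw [← h3]; ring
      have h4 := mul_le_mul_of_nonneg_left (hIoi_le _ (hbase_ge 2)) hp.le
      have h5 : 0 ≤ g' 1 * c 2 := mul_nonneg (hg'nn 1) (hcnn 2)
      linarith
    -- tsum version of the Abel bound
    have hsum2 : (∑' j : ℕ, ENNReal.ofReal ((g' (j+2) - g' (j+1)) * c (j+2))) ≤
        ENNReal.ofReal (p * Jr) := by
      rw [ENNReal.tsum_eq_iSup_sum]
      refine iSup_le fun F => ?_
      obtain ⟨n, hFn⟩ := F.exists_nat_subset_range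
      have hnn : ∀ j : ℕ, 0 ≤ (g' (j+2) - g' (j+1)) * c (j+2) := fun j =>
        mul_nonneg (sub_nonneg.mpr (hg'mono (by omega))) (hcnn _)
      calc (∑ j ∈ F, ENNReal.ofReal ((g' (j+2) - g' (j+1)) * c (j+2)))
          = ENNReal.ofReal (∑ j ∈ F, (g' (j+2) - g' (j+1)) * c (j+2)) :=
            (ENNReal.ofReal_sum_of_nonneg (fun j _ => hnn j)).symm
        _ ≤ ENNReal.ofReal (∑ j ∈ Finset.range n, (g' (j+2) - g' (j+1)) * c (j+2)) :=
            ENNReal.ofReal_le_ofReal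
              (Finset.sum_le_sum_of_subset_of_nonneg hFn (fun j _ _ => hnn j))
        _ ≤ ENNReal.ofReal (p * Jr) := ENNReal.ofReal_le_ofReal (hRLn n)
    -- swap the double sum
    have hswap : (∑' k : ℕ, ∑ j ∈ Finset.range k, (D j * μφ (Bk k))) =
        ∑' j : ℕ, D j * ∑' k : ℕ, (if j < k then μφ (Bk k) else 0) := by
      have h1 : ∀ k : ℕ, (∑ j ∈ Finset.range k, (D j * μφ (Bk k))) =
          ∑' j : ℕ, (if j < k then D j * μφ (Bk k) else 0) := by
        intro k
        rw [tsum_eq_sum (s := Finset.range k)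
          (fun j hj => if_neg (fun h => hj (Finset.mem_range.mpr h)))]
        exact (Finset.sum_congr rfl fun j hj => (if_pos (Finset.mem_range.mp hj))).symm
      rw [tsum_congr h1, ENNReal.tsum_comm]
      refine tsum_congr fun j => ?_
      rw [← ENNReal.tsum_mul_left]
      refine tsum_congr fun k => ?_
      split_ifs <;> simp
    -- two halves of the final bound
    have hhalf1 : ENNReal.ofReal (g' 1) * ENNReal.ofReal ((Cu + Cv) * c 0) ≤
        ENNReal.ofReal ((Cu + Cv) * r ^ p * (p * Jr)) := by
      rw [← ENNReal.ofReal_mul (hg'nn 1)]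
      refine ENNReal.ofReal_le_ofReal ?_
      have e2 : g' 1 * c 1 ≤ p * ∫ t in Set.Ioi (r ^ 1 * s₀), K t :=
        hGtail (r ^ 1 * s₀) (r ^ 1 * s₀) (hbase_ge 1) le_rfl
      have e3 : g' 1 * c 1 ≤ p * Jr :=
        le_trans e2 (mul_le_mul_of_nonneg_left (hIoi_le _ (hbase_ge 1)) hp.le)
      calc g' 1 * ((Cu + Cv) * c 0) = ((Cu + Cv) * r ^ p) * (g' 1 * c 1) := by
            rw [hcshift 0]; ring
        _ ≤ ((Cu + Cv) * r ^ p) * (p * Jr) :=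
            mul_le_mul_of_nonneg_left e3 (by positivity)
        _ = (Cu + Cv) * r ^ p * (p * Jr) := by ring
    have hhalf2 : (∑' j : ℕ, D j * ENNReal.ofReal ((Cu + Cv) * c (j+1))) ≤
        ENNReal.ofReal ((Cu + Cv) * r ^ p * (p * Jr)) := by
      have hterm : ∀ j : ℕ, D j * ENNReal.ofReal ((Cu + Cv) * c (j+1)) =
          ENNReal.ofReal ((Cu + Cv) * r ^ p) *
            ENNReal.ofReal ((g' (j+2) - g' (j+1)) * c (j+2)) := by
        intro j
        rw [hD, ← ENNReal.ofReal_mul (sub_nonneg.mpr (hg'mono (by omega))),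
          ← ENNReal.ofReal_mul (by positivity)]
        congr 1
        rw [hcshift (j+1)]
        ring
      calc (∑' j : ℕ, D j * ENNReal.ofReal ((Cu + Cv) * c (j+1)))
          = ENNReal.ofReal ((Cu + Cv) * r ^ p) *
              ∑' j : ℕ, ENNReal.ofReal ((g' (j+2) - g' (j+1)) * c (j+2)) := by
            rw [← ENNReal.tsum_mul_left]
            exact tsum_congr hterm
        _ ≤ ENNReal.ofReal ((Cu + Cv) * r ^ p) * ENNReal.ofReal (p * Jr) :=
            mul_le_mul_right hsum2 _
        _ = ENNReal.ofReal ((Cu + Cv) * r ^ p * (p * Jr)) := by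
            rw [← ENNReal.ofReal_mul (by positivity)]
    -- assemble
    calc (∫⁻ x in B, ENNReal.ofReal (g (u x) (v x) * φ x))
        ≤ ∫⁻ x in ⋃ k, Bk k, ENNReal.ofReal (g (u x) (v x) * φ x) :=
          lintegral_mono_set hcover
      _ ≤ ∑' k, ∫⁻ x in Bk k, ENNReal.ofReal (g (u x) (v x) * φ x) :=
          lintegral_iUnion_le _ _
      _ ≤ ∑' k, ENNReal.ofReal (g' (k+1)) * μφ (Bk k) :=
          ENNReal.tsum_le_tsum hstep
      _ = ∑' k, (ENNReal.ofReal (g' 1) * μφ (Bk k) +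
            ∑ j ∈ Finset.range k, (D j * μφ (Bk k))) := by
          refine tsum_congr fun k => ?_
          rw [htel k, add_mul, Finset.sum_mul]
      _ = ENNReal.ofReal (g' 1) * (∑' k, μφ (Bk k)) +
            ∑' k : ℕ, ∑ j ∈ Finset.range k, (D j * μφ (Bk k)) := by
          rw [ENNReal.tsum_add, ENNReal.tsum_mul_left]
      _ = ENNReal.ofReal (g' 1) * (∑' k, μφ (Bk k)) +
            ∑' j : ℕ, D j * ∑' k : ℕ, (if j < k then μφ (Bk k) else 0) := by
          rw [hswap]
      _ ≤ ENNReal.ofReal (g' 1) * ENNReal.ofReal ((Cu + Cv) * c 0) +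
            ∑' j : ℕ, D j * ENNReal.ofReal ((Cu + Cv) * c (j+1)) := by
          refine add_le_add (mul_le_mul_right hm_all _) (ENNReal.tsum_le_tsum fun j =>
            mul_le_mul_right (hm_tail j) _)
      _ ≤ ENNReal.ofReal ((Cu + Cv) * r ^ p * (p * Jr)) +
            ENNReal.ofReal ((Cu + Cv) * r ^ p * (p * Jr)) := add_le_add hhalf1 hhalf2
      _ = ENNReal.ofReal (2 * (Cu + Cv) * p * Jr * r ^ p) := by
          rw [← ENNReal.ofReal_add (by positivity) (by positivity)]
          congr 1
          ring
  -- pass to the limit r → 1⁺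
  have hBfinal : (∫⁻ x in B, ENNReal.ofReal (g (u x) (v x) * φ x)) ≤
      ENNReal.ofReal (2 * (Cu + Cv) * p * Jr) := by
    have h1 : ContinuousAt (fun r : ℝ => r ^ p) 1 :=
      Real.continuousAt_rpow_const 1 p (Or.inl one_ne_zero)
    have h2 : Tendsto (fun r : ℝ => 2 * (Cu + Cv) * p * Jr * r ^ p) (nhdsWithin 1 (Set.Ioi 1))
        (nhds (2 * (Cu + Cv) * p * Jr)) := by
      have h3 := (h1.tendsto.const_mul (2 * (Cu + Cv) * p * Jr)).mono_left
        (nhdsWithin_le_nhds (s := Set.Ioi (1:ℝ)))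
      simpa [Real.one_rpow] using h3
    have h4 : Tendsto (fun r : ℝ => ENNReal.ofReal (2 * (Cu + Cv) * p * Jr * r ^ p))
        (nhdsWithin 1 (Set.Ioi 1)) (nhds (ENNReal.ofReal (2 * (Cu + Cv) * p * Jr))) :=
      (ENNReal.continuous_ofReal.continuousAt.tendsto).comp h2
    exact ge_of_tendsto h4 (eventually_nhdsWithin_of_forall fun r hr => key r hr)
  -- final assembly
  have hJeq : (∫ s in Set.Ioi s₀, s ^ (-1 - p) * g s (s ^ (p / q))) = Jr := by
    refine setIntegral_congr_fun measurableSet_Ioi (fun t ht => ?_)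
    simp only [hKdef, hGmdef]
    rw [max_eq_left (le_of_lt ht)]
  have hsplitΩ : Ω = A ∪ B := (union_diff_cancel hAsub).symm
  calc (∫⁻ x in Ω, ENNReal.ofReal (g (u x) (v x) * φ x))
      = ∫⁻ x in A ∪ B, ENNReal.ofReal (g (u x) (v x) * φ x) := by rw [← hsplitΩ]
    _ ≤ (∫⁻ x in A, ENNReal.ofReal (g (u x) (v x) * φ x)) +
          ∫⁻ x in B, ENNReal.ofReal (g (u x) (v x) * φ x) := lintegral_union_le _ _ _
    _ ≤ (∫⁻ x in A, ENNReal.ofReal (g (u x) (v x) * φ x)) +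
          ENNReal.ofReal (2 * (Cu + Cv) * p * Jr) := add_le_add_right hBfinal _
    _ = (∫⁻ x in A, ENNReal.ofReal (g (u x) (v x) * φ x)) +
          ENNReal.ofReal (2 * p * (Cu + Cv) *
            ∫ s in Set.Ioi s₀, s ^ (-1 - p) * g s (s ^ (p / q))) := by
          rw [hJeq]
          congr 2
          ring
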